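/- Let V : {0,1,…,L} → ℝ be a convex sequence (V(n+1) + V(n−1) ≥ 2V(n) for 1 ≤ n ≤ L−1) and let V'(n) = V(n+1) − V(n) be its slope sequence. Define n_0 = 0 and inductively n_{i+1} = min{n > n_i : V'(n) > V'(n_i)} for as long as this set is nonempty, obtaining n_0 < n_1 < … < n_k. For i = 0,1,…,k define the sequence V_i on {0,…,L} by V_i(n) = V(n) for n ∈ [0, n_i] and V_i(n) = V(n_i) + V'(n_i)·(n − n_i) for n ∈ [n_i, L]. Then there exists ε > 0 such that for all δ, δ_0, δ_1, …, δ_k ∈ (−ε, ε), the sequence n ↦ e^{−V(n)} · (1 + δ + δ_0 V_0(n) + δ_1 V_1(n) + … + δ_k V_k(n)) is log-concave on {0,1,…,L}. -/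

import Mathlib

def LogConcaveOn (L : ℕ) (p : ℕ → ℝ) : Prop :=
  (∀ n ≤ L, 0 ≤ p n) ∧
  (∀ i j k : ℕ, i ≤ j → j ≤ k → k ≤ L → 0 < p i → 0 < p k → 0 < p j) ∧
  ∀ n : ℕ, 1 ≤ n → n + 1 ≤ L → p (n + 1) * p (n - 1) ≤ p n ^ 2

/-- The truncated/affinely-continued sequence `Vᵢ`. -/
def Wfun (V : ℕ → ℝ) (nn : ℕ → ℕ) (i m : ℕ) : ℝ :=
  if m ≤ nn i then V m
  else V (nn i) + (V (nn i + 1) - V (nn i)) * ((m : ℝ) - (nn i : ℝ))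

/-- Second difference of `Wfun` equals that of `V` up to `nn i`, and `0` afterwards. -/
lemma Wfun_sdiff (V : ℕ → ℝ) (nn : ℕ → ℕ) (i n : ℕ) (hn : 1 ≤ n) :
    Wfun V nn i (n + 1) + Wfun V nn i (n - 1) - 2 * Wfun V nn i n
      = if n ≤ nn i then V (n + 1) + V (n - 1) - 2 * V n else 0 := by
  obtain ⟨m, rfl⟩ : ∃ m, n = m + 1 := ⟨n - 1, by omega⟩
  simp only [Wfun, Nat.add_sub_cancel]
  rcases lt_trichotomy (m + 1) (nn i) with h | h | h
  · rw [if_pos (by omega : m + 1 + 1 ≤ nn i), if_pos (by omega : m ≤ nn i),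
      if_pos (by omega : m + 1 ≤ nn i), if_pos (by omega : m + 1 ≤ nn i)]
  · rw [if_neg (by omega : ¬ m + 1 + 1 ≤ nn i), if_pos (by omega : m ≤ nn i),
      if_pos (by omega : m + 1 ≤ nn i), if_pos (by omega : m + 1 ≤ nn i)]
    rw [← h]
    push_cast
    ring
  · by_cases hm : m ≤ nn i
    · have hm' : m = nn i := by omega
      rw [if_neg (by omega : ¬ m + 1 + 1 ≤ nn i), if_pos hm,
        if_neg (by omega : ¬ m + 1 ≤ nn i), if_neg (by omega : ¬ m + 1 ≤ nn i), hm']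
      push_cast
      ring
    · rw [if_neg (by omega : ¬ m + 1 + 1 ≤ nn i), if_neg hm,
        if_neg (by omega : ¬ m + 1 ≤ nn i), if_neg (by omega : ¬ m + 1 ≤ nn i)]
      push_cast
      ring

/-- The key scalar inequality: if `x + y = 2 z + d` with `z ≥ 1/2`, `|d| ≤ c/2`, `c ≥ 0`,
then `x y ≤ e^c z²`. -/
lemma key_ineq (c d x y z : ℝ) (hc : 0 ≤ c) (hz : 1 / 2 ≤ z) (hd : |d| ≤ c / 2)
    (hsum : x + y = 2 * z + d) : x * y ≤ Real.exp c * z ^ 2 := by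
  obtain ⟨hd1, hd2⟩ := abs_le.mp hd
  have h1 : x * y ≤ (z + d / 2) ^ 2 := by nlinarith [sq_nonneg (x - y)]
  have hz0 : (0:ℝ) ≤ z := by linarith
  have h2 : (z + d / 2) ^ 2 ≤ ((1 + c / 2) * z) ^ 2 := by
    nlinarith [mul_le_mul_of_nonneg_left hd2 hz0,
      mul_nonneg (mul_nonneg hc hz0) (by linarith : (0:ℝ) ≤ z - 1/2),
      sq_le_sq' hd1 hd2,
      mul_nonneg (mul_nonneg (mul_nonneg hc hc) (by linarith : (0:ℝ) ≤ z - 1/2))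
        (by linarith : (0:ℝ) ≤ z + 1/2)]
  have h3 : 1 + c / 2 ≤ Real.exp (c / 2) := by linarith [Real.add_one_le_exp (c / 2)]
  have h5 : (1 + c / 2) ^ 2 ≤ Real.exp c := by
    have he : Real.exp c = Real.exp (c / 2) * Real.exp (c / 2) := by
      rw [← Real.exp_add]; ring_nf
    nlinarith [Real.exp_pos (c / 2)]
  nlinarith [sq_nonneg z]

/-- Reduction: log-concavity of `e^{-V} f` follows from the second-difference bound on `f`. -/
lemma logconcave_aux (L : ℕ) (V f : ℕ → ℝ)
    (hfb : ∀ m ≤ L, 1 / 2 ≤ f m)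
    (hconv : ∀ n : ℕ, 1 ≤ n → n + 1 ≤ L → 2 * V n ≤ V (n + 1) + V (n - 1))
    (hd : ∀ n : ℕ, 1 ≤ n → n + 1 ≤ L →
      |f (n + 1) + f (n - 1) - 2 * f n| ≤ (V (n + 1) + V (n - 1) - 2 * V n) / 2) :
    LogConcaveOn L (fun m => Real.exp (-(V m)) * f m) := by
  have hfpos : ∀ m ≤ L, 0 < f m := fun m hm => lt_of_lt_of_le (by norm_num) (hfb m hm)
  refine ⟨?_, ?_, ?_⟩
  · intro m hm
    exact le_of_lt (mul_pos (Real.exp_pos _) (hfpos m hm))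
  · intro i j kk _ hjk hkL _ _
    exact mul_pos (Real.exp_pos _) (hfpos j (le_trans hjk hkL))
  · intro n hn hnL
    have hc0 : 0 ≤ V (n + 1) + V (n - 1) - 2 * V n := by linarith [hconv n hn hnL]
    have h1 : f (n + 1) * f (n - 1) ≤
        Real.exp (V (n + 1) + V (n - 1) - 2 * V n) * f n ^ 2 := by
      apply key_ineq _ (f (n + 1) + f (n - 1) - 2 * f n) _ _ _ hc0
        (hfb n (by omega)) (hd n hn hnL) (by ring)
    have h2 : Real.exp (-(V (n + 1))) * Real.exp (-(V (n - 1))) *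
        Real.exp (V (n + 1) + V (n - 1) - 2 * V n) = Real.exp (-(V n)) ^ 2 := by
      rw [← Real.exp_add, ← Real.exp_add, sq, ← Real.exp_add]
      congr 1
      ring
    calc Real.exp (-(V (n + 1))) * f (n + 1) * (Real.exp (-(V (n - 1))) * f (n - 1))
        = Real.exp (-(V (n + 1))) * Real.exp (-(V (n - 1))) * (f (n + 1) * f (n - 1)) := by
          ring
      _ ≤ Real.exp (-(V (n + 1))) * Real.exp (-(V (n - 1))) *
          (Real.exp (V (n + 1) + V (n - 1) - 2 * V n) * f n ^ 2) := by
          exact mul_le_mul_of_nonneg_left h1 (by positivity)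
      _ = Real.exp (-(V (n + 1))) * Real.exp (-(V (n - 1))) *
          Real.exp (V (n + 1) + V (n - 1) - 2 * V n) * f n ^ 2 := by ring
      _ = Real.exp (-(V n)) ^ 2 * f n ^ 2 := by rw [h2]
      _ = (Real.exp (-(V n)) * f n) ^ 2 := by ring

theorem perturbed_sequence_log_concave
    (L : ℕ) (hL : 1 ≤ L) (V : ℕ → ℝ)
    (hconv : ∀ n : ℕ, 1 ≤ n → n + 1 ≤ L → 2 * V n ≤ V (n + 1) + V (n - 1))
    (k : ℕ) (nn : ℕ → ℕ) (hn0 : nn 0 = 0)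
    (hdom : ∀ i ≤ k, nn i + 1 ≤ L)
    (hstep : ∀ i < k,
      nn i < nn (i + 1) ∧
      V (nn i + 1) - V (nn i) < V (nn (i + 1) + 1) - V (nn (i + 1)) ∧
      ∀ m, nn i < m → m < nn (i + 1) →
        ¬ (V (nn i + 1) - V (nn i) < V (m + 1) - V m))
    (hlast : ∀ m, nn k < m → m + 1 ≤ L →
      ¬ (V (nn k + 1) - V (nn k) < V (m + 1) - V m)) :
    ∃ ε > 0, ∀ (δ : ℝ) (δ' : ℕ → ℝ), |δ| < ε → (∀ i ≤ k, |δ' i| < ε) →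
      LogConcaveOn L (fun m => Real.exp (-(V m)) *
        (1 + δ + ∑ i ∈ Finset.range (k + 1), δ' i *
          (if m ≤ nn i then V m
           else V (nn i) + (V (nn i + 1) - V (nn i)) * ((m : ℝ) - (nn i : ℝ))))) := by
  classical
  set S : ℝ := ∑ i ∈ Finset.range (k + 1), ∑ m ∈ Finset.range (L + 1), |Wfun V nn i m|
    with hS
  have hS0 : 0 ≤ S :=
    Finset.sum_nonneg fun i _ => Finset.sum_nonneg fun m _ => abs_nonneg _
  set A : ℝ := 1 + S with hA
  have hApos : (0 : ℝ) < A := by rw [hA]; linarith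
  have hA1 : (1 : ℝ) ≤ A := by rw [hA]; linarith
  clear_value S A
  have hk1 : (0 : ℝ) < (k : ℝ) + 1 := by positivity
  refine ⟨1 / (4 * ((k : ℝ) + 1) * A), by positivity, ?_⟩
  intro δ δ' hδ hδ'
  set ε : ℝ := 1 / (4 * ((k : ℝ) + 1) * A) with hε
  have hεpos : 0 < ε := by rw [hε]; positivity
  have hδ'' : ∀ i ∈ Finset.range (k + 1), |δ' i| < ε := by
    intro i hi
    exact hδ' i (Nat.lt_succ_iff.mp (Finset.mem_range.mp hi))
  have hεA : ε * A ≤ 1 / 4 := by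
    rw [hε, div_mul_eq_mul_div, one_mul, div_le_div_iff₀ (by positivity) (by norm_num)]
    nlinarith
  have hεk : ε * ((k : ℝ) + 1) ≤ 1 / 4 := by
    rw [hε, div_mul_eq_mul_div, one_mul, div_le_div_iff₀ (by positivity) (by norm_num)]
    nlinarith
  clear_value ε
  refine logconcave_aux L V
    (fun m => 1 + δ + ∑ i ∈ Finset.range (k + 1), δ' i * Wfun V nn i m) ?_ hconv ?_
  · -- lower bound on the perturbation factor
    intro m hm
    have hsum : ∑ i ∈ Finset.range (k + 1), |Wfun V nn i m| ≤ S := by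
      rw [hS]
      exact Finset.sum_le_sum fun i _ =>
        Finset.single_le_sum (fun m' _ => abs_nonneg (Wfun V nn i m'))
          (Finset.mem_range.mpr (by omega))
    have habs : |δ + ∑ i ∈ Finset.range (k + 1), δ' i * Wfun V nn i m| ≤ ε * A := by
      calc |δ + ∑ i ∈ Finset.range (k + 1), δ' i * Wfun V nn i m|
          ≤ |δ| + |∑ i ∈ Finset.range (k + 1), δ' i * Wfun V nn i m| := abs_add_le _ _
        _ ≤ ε + ∑ i ∈ Finset.range (k + 1), |δ' i * Wfun V nn i m| :=
            add_le_add (le_of_lt hδ) (Finset.abs_sum_le_sum_abs _ _)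
        _ ≤ ε + ∑ i ∈ Finset.range (k + 1), ε * |Wfun V nn i m| := by
            apply add_le_add_right
            apply Finset.sum_le_sum
            intro i hi
            rw [abs_mul]
            exact mul_le_mul_of_nonneg_right (le_of_lt (hδ'' i hi)) (abs_nonneg _)
        _ = ε + ε * ∑ i ∈ Finset.range (k + 1), |Wfun V nn i m| := by
            rw [Finset.mul_sum]
        _ ≤ ε + ε * S := by
            exact add_le_add_right (mul_le_mul_of_nonneg_left hsum (le_of_lt hεpos)) _
        _ = ε * A := by rw [hA]; ring
    have := (abs_le.mp habs).1
    have h14 : -(1/4 : ℝ) ≤ δ + ∑ i ∈ Finset.range (k + 1), δ' i * Wfun V nn i m := by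
      linarith
    linarith
  · -- second-difference bound
    intro n hn hnL
    have hc0 : 0 ≤ V (n + 1) + V (n - 1) - 2 * V n := by linarith [hconv n hn hnL]
    have e1 : ∑ i ∈ Finset.range (k + 1),
        δ' i * (if n ≤ nn i then V (n + 1) + V (n - 1) - 2 * V n else 0)
        = ∑ i ∈ Finset.range (k + 1), (δ' i * Wfun V nn i (n + 1)
            + δ' i * Wfun V nn i (n - 1) - 2 * (δ' i * Wfun V nn i n)) := by
      apply Finset.sum_congr rfl
      intro i _
      rw [← Wfun_sdiff V nn i n hn]
      ring
    have e2 : ∑ i ∈ Finset.range (k + 1), (δ' i * Wfun V nn i (n + 1)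
          + δ' i * Wfun V nn i (n - 1) - 2 * (δ' i * Wfun V nn i n))
        = (∑ i ∈ Finset.range (k + 1), δ' i * Wfun V nn i (n + 1))
          + (∑ i ∈ Finset.range (k + 1), δ' i * Wfun V nn i (n - 1))
          - 2 * ∑ i ∈ Finset.range (k + 1), δ' i * Wfun V nn i n := by
      rw [Finset.sum_sub_distrib, Finset.sum_add_distrib, ← Finset.mul_sum]
    have hX : (1 + δ + ∑ i ∈ Finset.range (k + 1), δ' i * Wfun V nn i (n + 1))
        + (1 + δ + ∑ i ∈ Finset.range (k + 1), δ' i * Wfun V nn i (n - 1))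
        - 2 * (1 + δ + ∑ i ∈ Finset.range (k + 1), δ' i * Wfun V nn i n)
        = ∑ i ∈ Finset.range (k + 1),
            δ' i * (if n ≤ nn i then V (n + 1) + V (n - 1) - 2 * V n else 0) := by
      rw [e1, e2]; ring
    show |(1 + δ + ∑ i ∈ Finset.range (k + 1), δ' i * Wfun V nn i (n + 1))
        + (1 + δ + ∑ i ∈ Finset.range (k + 1), δ' i * Wfun V nn i (n - 1))
        - 2 * (1 + δ + ∑ i ∈ Finset.range (k + 1), δ' i * Wfun V nn i n)|
        ≤ (V (n + 1) + V (n - 1) - 2 * V n) / 2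
    rw [hX]
    calc |∑ i ∈ Finset.range (k + 1),
          δ' i * (if n ≤ nn i then V (n + 1) + V (n - 1) - 2 * V n else 0)|
        ≤ ∑ i ∈ Finset.range (k + 1),
            |δ' i * (if n ≤ nn i then V (n + 1) + V (n - 1) - 2 * V n else 0)| :=
          Finset.abs_sum_le_sum_abs _ _
      _ ≤ ∑ _i ∈ Finset.range (k + 1), ε * (V (n + 1) + V (n - 1) - 2 * V n) := by
          apply Finset.sum_le_sum
          intro i hi
          rw [abs_mul]
          apply mul_le_mul (le_of_lt (hδ'' i hi)) _ (abs_nonneg _) (le_of_lt hεpos)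
          split_ifs with h
          · rw [abs_of_nonneg hc0]
          · simpa using hc0
      _ = ((k : ℝ) + 1) * (ε * (V (n + 1) + V (n - 1) - 2 * V n)) := by
          rw [Finset.sum_const, Finset.card_range, nsmul_eq_mul]
          push_cast
          ring
      _ ≤ (V (n + 1) + V (n - 1) - 2 * V n) / 2 := by
          nlinarith [mul_le_mul_of_nonneg_right hεk hc0]
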